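/- Dilworth's theorem: every finite poset P can be partitioned into w chains, where w is the maximum cardinality of an antichain in P. -/

import Mathlib

open Finset

section Dilworth

variable {P : Type*} [PartialOrder P] [DecidableEq P]

open Classical in
/-- Max cardinality of an antichain inside `S`. -/
noncomputable def acWidth (S : Finset P) : ℕ :=
  (S.powerset.filter fun A : Finset P => IsAntichain (· ≤ ·) (A : Set P)).sup Finset.card

lemma le_acWidth {S A : Finset P} (hAS : A ⊆ S)
    (hA : IsAntichain (· ≤ ·) (A : Set P)) : A.card ≤ acWidth S := by
  classical
  apply Finset.le_sup (f := Finset.card)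
  simp [Finset.mem_filter, Finset.mem_powerset, hAS, hA]

lemma exists_acWidth (S : Finset P) :
    ∃ A : Finset P, A ⊆ S ∧ IsAntichain (· ≤ ·) (A : Set P) ∧ A.card = acWidth S := by
  classical
  have hne : ((S.powerset.filter fun A : Finset P => IsAntichain (· ≤ ·) ((A : Finset P) : Set P))).Nonempty := by
    refine ⟨∅, ?_⟩
    exact Finset.mem_filter.mpr ⟨Finset.empty_mem_powerset S, by rw [Finset.coe_empty]; exact Set.pairwise_empty _⟩
  obtain ⟨A, hA, hcard⟩ := Finset.exists_mem_eq_sup _ hne Finset.card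
  simp only [Finset.mem_filter, Finset.mem_powerset] at hA
  exact ⟨A, hA.1, hA.2, hcard.symm⟩

lemma acWidth_mono {S T : Finset P} (h : S ⊆ T) : acWidth S ≤ acWidth T := by
  classical
  apply Finset.sup_le
  intro A hA
  simp only [Finset.mem_filter, Finset.mem_powerset] at hA
  exact le_acWidth (hA.1.trans h) hA.2

/-- A partition of `S` into nonempty chains. -/
def ChainCover (S : Finset P) (C : Finset (Finset P)) : Prop :=
  (∀ c ∈ C, IsChain (· ≤ ·) (c : Set P) ∧ c.Nonempty ∧ c ⊆ S) ∧
  (∀ x ∈ S, ∃ c ∈ C, x ∈ c) ∧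
  (∀ c ∈ C, ∀ d ∈ C, c ≠ d → Disjoint c d)

lemma chain_antichain {c A : Finset P} (hc : IsChain (· ≤ ·) (c : Set P))
    (hA : IsAntichain (· ≤ ·) (A : Set P)) {x y : P}
    (hxc : x ∈ c) (hyc : y ∈ c) (hxA : x ∈ A) (hyA : y ∈ A) : x = y := by
  by_contra hne
  rcases hc (by exact_mod_cast hxc) (by exact_mod_cast hyc) hne with h | h
  · exact hA (by exact_mod_cast hxA) (by exact_mod_cast hyA) hne h
  · exact hA (by exact_mod_cast hyA) (by exact_mod_cast hxA) (Ne.symm hne) h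

lemma acWidth_le_card_of_cover {S : Finset P} {C : Finset (Finset P)}
    (hCC : ChainCover S C) : acWidth S ≤ C.card := by
  classical
  obtain ⟨A, hAS, hA, hAcard⟩ := exists_acWidth S
  rw [← hAcard]
  set f : P → Finset P := fun a => if h : ∃ c ∈ C, a ∈ c then h.choose else ∅ with hf
  have hmem : ∀ a ∈ A, f a ∈ C ∧ a ∈ f a := by
    intro a ha
    have h : ∃ c ∈ C, a ∈ c := hCC.2.1 a (hAS ha)
    simp only [hf, dif_pos h]
    exact ⟨h.choose_spec.1, h.choose_spec.2⟩
  refine Finset.card_le_card_of_injOn f (fun a ha => (hmem a ha).1) ?_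
  intro x hx y hy hxy
  obtain ⟨hfx, hxf⟩ := hmem x hx
  obtain ⟨hfy, hyf⟩ := hmem y hy
  exact chain_antichain (hCC.1 _ hfx).1 hA hxf (hxy ▸ hyf) hx hy

lemma cover_meets {S : Finset P} {C : Finset (Finset P)} {A : Finset P}
    (hCC : ChainCover S C) (hAS : A ⊆ S) (hA : IsAntichain (· ≤ ·) (A : Set P))
    (hcard : C.card ≤ A.card) : ∀ c ∈ C, ∃ a ∈ A, a ∈ c := by
  classical
  set f : P → Finset P := fun a => if h : ∃ c ∈ C, a ∈ c then h.choose else ∅ with hf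
  have hmem : ∀ a ∈ A, f a ∈ C ∧ a ∈ f a := by
    intro a ha
    have h : ∃ c ∈ C, a ∈ c := hCC.2.1 a (hAS ha)
    simp only [hf, dif_pos h]
    exact ⟨h.choose_spec.1, h.choose_spec.2⟩
  intro c hc
  obtain ⟨a, ha, hfa⟩ := Finset.surj_on_of_inj_on_of_card_le (fun a _ => f a)
    (fun a ha => (hmem a ha).1)
    (fun x y hx hy hxy => chain_antichain (hCC.1 _ (hmem x hx).1).1 hA
      (hmem x hx).2 ((show f x = f y from hxy) ▸ (hmem y hy).2) hx hy)
    hcard c hc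
  exact ⟨a, ha, hfa ▸ (hmem a ha).2⟩

lemma dilworth_aux : ∀ n : ℕ, ∀ S : Finset P, S.card ≤ n →
    ∃ C : Finset (Finset P), ChainCover S C ∧ C.card ≤ acWidth S := by
  classical
  intro n
  induction n with
  | zero =>
    intro S hS
    have : S = ∅ := Finset.card_eq_zero.mp (Nat.le_zero.mp hS)
    subst this
    exact ⟨∅, ⟨by simp, by simp, by simp⟩, by simp⟩
  | succ n ih =>
    intro S hS
    rcases S.eq_empty_or_nonempty with rfl | hSne
    · exact ⟨∅, ⟨by simp, by simp, by simp⟩, by simp⟩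
    obtain ⟨m, hmS, hmax⟩ := S.exists_maximal hSne
    set S' := S.erase m with hS'
    have hmS' : m ∉ S' := Finset.notMem_erase m S
    have hS'S : S' ⊆ S := Finset.erase_subset m S
    have hS'card : S'.card ≤ n := by
      rw [hS', Finset.card_erase_of_mem hmS]
      omega
    obtain ⟨C', hCC', hC'le⟩ := ih S' hS'card
    have hk : C'.card = acWidth S' :=
      le_antisymm hC'le (acWidth_le_card_of_cover hCC')
    -- the set of elements of c belonging to some maximum antichain of S'
    set T : Finset P → Finset P := fun c =>
      c.filter (fun x => ∃ A : Finset P, A ⊆ S' ∧ IsAntichain (· ≤ ·) (A : Set P) ∧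
        A.card = acWidth S' ∧ x ∈ A) with hT
    have hTsub : ∀ c, T c ⊆ c := fun c => Finset.filter_subset _ _
    -- choose the top element of T c for each chain c
    have hex : ∀ c : Finset P, ∃ a : P, c ∈ C' → (a ∈ T c ∧ ∀ x ∈ T c, x ≤ a) := by
      intro c
      by_cases hc : c ∈ C'
      · obtain ⟨A0, hA0S, hA0ac, hA0card⟩ := exists_acWidth S'
        have hmeet := cover_meets hCC' hA0S hA0ac (by omega) c hc
        obtain ⟨a0, ha0A, ha0c⟩ := hmeet
        have hTne : (T c).Nonempty := by
          refine ⟨a0, ?_⟩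
          rw [hT]
          simp only [Finset.mem_filter]
          exact ⟨ha0c, A0, hA0S, hA0ac, hA0card, ha0A⟩
        obtain ⟨a, haT, hamax⟩ := (T c).exists_maximal hTne
        refine ⟨a, fun _ => ⟨haT, ?_⟩⟩
        intro x hx
        by_cases hxa : x = a
        · exact hxa.le
        · rcases (hCC'.1 c hc).1 (by exact_mod_cast hTsub c hx)
            (by exact_mod_cast hTsub c haT) hxa with h | h
          · exact h
          · exact absurd (lt_of_le_of_ne h (Ne.symm hxa)) (fun hlt => hlt.ne' (le_antisymm (hamax hx hlt.le) hlt.le))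
      · exact ⟨m, fun h => absurd h hc⟩
    choose a haspec using hex
    have haTc : ∀ c ∈ C', a c ∈ T c := fun c hc => (haspec c hc).1
    have hatop : ∀ c ∈ C', ∀ x ∈ T c, x ≤ a c := fun c hc => (haspec c hc).2
    have hac : ∀ c ∈ C', a c ∈ c := fun c hc => hTsub c (haTc c hc)
    have haS' : ∀ c ∈ C', a c ∈ S' := fun c hc => (hCC'.1 c hc).2.2 (hac c hc)
    -- key incomparability
    have key : ∀ c ∈ C', ∀ d ∈ C', c ≠ d → ¬ a c ≤ a d := by
      intro c hc d hd hne hle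
      have hTd := haTc d hd
      rw [hT] at hTd
      simp only [Finset.mem_filter] at hTd
      obtain ⟨-, A, hAS', hAac, hAcard, hadA⟩ := hTd
      obtain ⟨x, hxA, hxc⟩ := cover_meets hCC' hAS' hAac (by omega) c hc
      have hxT : x ∈ T c := by
        rw [hT]; simp only [Finset.mem_filter]
        exact ⟨hxc, A, hAS', hAac, hAcard, hxA⟩
      have hxac : x ≤ a c := hatop c hc x hxT
      have hxad : x ≤ a d := hxac.trans hle
      have hxeq : x = a d := by
        by_contra hne'
        exact hAac (by exact_mod_cast hxA) (by exact_mod_cast hadA) hne' hxad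
      have : a d ∈ c := hxeq ▸ hxc
      exact (Finset.disjoint_left.mp (hCC'.2.2 c hc d hd hne) this) (hac d hd)
    by_cases hcase : ∃ c ∈ C', a c ≤ m
    · -- remove the chain K = {x ∈ c : x ≤ a c} ∪ {m}
      obtain ⟨c, hc, hle⟩ := hcase
      set K : Finset P := insert m (c.filter (· ≤ a c)) with hK
      have hmK : m ∈ K := Finset.mem_insert_self m _
      have hKS : K ⊆ S := by
        intro x hx
        rcases Finset.mem_insert.mp hx with rfl | hx
        · exact hmS
        · exact hS'S ((hCC'.1 c hc).2.2 (Finset.mem_filter.mp hx).1)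
      have hKchain : IsChain (· ≤ ·) (K : Set P) := by
        intro x hx y hy hne
        simp only [hK, Finset.coe_insert, Set.mem_insert_iff, Finset.coe_filter,
          Set.mem_setOf_eq] at hx hy
        rcases hx with rfl | ⟨hxc, hxa⟩
        · rcases hy with rfl | ⟨hyc, hya⟩
          · exact absurd rfl hne
          · exact Or.inr (hya.trans hle)
        · rcases hy with rfl | ⟨hyc, hya⟩
          · exact Or.inl (hxa.trans hle)
          · exact (hCC'.1 c hc).1 (by exact_mod_cast hxc) (by exact_mod_cast hyc) hne
      set S'' := S \ K with hS''
      have hS''S' : S'' ⊆ S' := by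
        intro x hx
        obtain ⟨hxS, hxK⟩ := Finset.mem_sdiff.mp hx
        exact Finset.mem_erase.mpr ⟨fun h => hxK (h ▸ hmK), hxS⟩
      have hS''card : S''.card ≤ n := by
        have : S'' ⊆ S' := hS''S'
        have := Finset.card_le_card this
        omega
      obtain ⟨C'', hCC'', hC''le⟩ := ih S'' hS''card
      have hWlt : acWidth S'' < acWidth S' := by
        by_contra hge
        push_neg at hge
        obtain ⟨B, hBsub, hBac, hBcard⟩ := exists_acWidth S''
        have hBS' : B ⊆ S' := hBsub.trans hS''S'
        have hBk : B.card = acWidth S' :=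
          le_antisymm (le_acWidth hBS' hBac) (by omega)
        obtain ⟨y, hyB, hyc⟩ := cover_meets hCC' hBS' hBac (by omega) c hc
        have hyT : y ∈ T c := by
          rw [hT]; simp only [Finset.mem_filter]
          exact ⟨hyc, B, hBS', hBac, hBk, hyB⟩
        have hya : y ≤ a c := hatop c hc y hyT
        have hyK : y ∈ K := Finset.mem_insert_of_mem (Finset.mem_filter.mpr ⟨hyc, hya⟩)
        exact (Finset.mem_sdiff.mp (hBsub hyB)).2 hyK
      have hKnotC'' : K ∉ C'' := by
        intro h
        have := (hCC''.1 K h).2.2 hmK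
        exact (Finset.mem_sdiff.mp this).2 hmK
      refine ⟨insert K C'', ⟨?_, ?_, ?_⟩, ?_⟩
      · intro d hd
        rcases Finset.mem_insert.mp hd with rfl | hd
        · exact ⟨hKchain, ⟨m, hmK⟩, hKS⟩
        · exact ⟨(hCC''.1 d hd).1, (hCC''.1 d hd).2.1,
            (hCC''.1 d hd).2.2.trans (Finset.sdiff_subset)⟩
      · intro x hx
        by_cases hxK : x ∈ K
        · exact ⟨K, Finset.mem_insert_self _ _, hxK⟩
        · obtain ⟨d, hd, hxd⟩ := hCC''.2.1 x (Finset.mem_sdiff.mpr ⟨hx, hxK⟩)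
          exact ⟨d, Finset.mem_insert_of_mem hd, hxd⟩
      · intro c₁ h₁ c₂ h₂ hne
        rcases Finset.mem_insert.mp h₁ with rfl | h₁ <;>
          rcases Finset.mem_insert.mp h₂ with rfl | h₂
        · exact absurd rfl hne
        · exact Finset.disjoint_left.mpr fun x hx hx' =>
            (Finset.mem_sdiff.mp ((hCC''.1 _ h₂).2.2 hx')).2 hx
        · exact Finset.disjoint_right.mpr fun x hx hx' =>
            (Finset.mem_sdiff.mp ((hCC''.1 _ h₁).2.2 hx')).2 hx
        · exact hCC''.2.2 c₁ h₁ c₂ h₂ hne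
      · have h1 : (insert K C'').card ≤ C''.card + 1 := Finset.card_insert_le _ _
        have h2 : acWidth S' ≤ acWidth S := acWidth_mono hS'S
        omega
    · -- m is incomparable to all the a c : add {m} as a new chain
      push_neg at hcase
      have hmono : C'.card + 1 ≤ acWidth S := by
        set A' : Finset P := insert m (C'.image a) with hA'
        have hmnotim : m ∉ C'.image a := by
          intro h
          obtain ⟨d, hd, hda⟩ := Finset.mem_image.mp h
          exact hmS' (hda ▸ haS' d hd)
        have hinj : Set.InjOn a (C' : Set (Finset P)) := by
          intro x hx y hy hxy
          by_contra hne
          exact (Finset.disjoint_left.mp (hCC'.2.2 x (by exact_mod_cast hx)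
            y (by exact_mod_cast hy) hne) (hac x (by exact_mod_cast hx)))
            (hxy ▸ hac y (by exact_mod_cast hy))
        have hcard' : A'.card = C'.card + 1 := by
          rw [hA', Finset.card_insert_of_notMem hmnotim, Finset.card_image_of_injOn hinj]
        have hA'S : A' ⊆ S := by
          intro x hx
          rcases Finset.mem_insert.mp hx with rfl | hx
          · exact hmS
          · obtain ⟨d, hd, hda⟩ := Finset.mem_image.mp hx
            exact hS'S (hda ▸ haS' d hd)
        have hA'ac : IsAntichain (· ≤ ·) (A' : Set P) := by
          intro x hx y hy hne hxy
          simp only [hA', Finset.coe_insert, Set.mem_insert_iff, Finset.coe_image,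
            Set.mem_image, Finset.mem_coe] at hx hy
          rcases hx with rfl | ⟨cx, hcx, rfl⟩
          · rcases hy with rfl | ⟨cy, hcy, rfl⟩
            · exact hne rfl
            · -- m ≤ a cy : contradiction with maximality of m
              have hnlt : ¬ x < a cy := fun hlt => hlt.ne (le_antisymm hlt.le (hmax (hS'S (haS' cy hcy)) hlt.le))
              have : x = a cy := le_antisymm hxy (by
                by_contra h
                exact hnlt (lt_of_le_of_ne hxy hne))
              exact hne this
          · rcases hy with rfl | ⟨cy, hcy, rfl⟩
            · exact hcase cx hcx hxy
            · have hcne : cx ≠ cy := fun h => hne (h ▸ rfl)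
              exact key cx hcx cy hcy hcne hxy
        calc C'.card + 1 = A'.card := hcard'.symm
          _ ≤ acWidth S := le_acWidth hA'S hA'ac
      have hmnot : ({m} : Finset P) ∉ C' := by
        intro h
        exact hmS' ((hCC'.1 _ h).2.2 (Finset.mem_singleton_self m))
      refine ⟨insert {m} C', ⟨?_, ?_, ?_⟩, ?_⟩
      · intro d hd
        rcases Finset.mem_insert.mp hd with rfl | hd
        · refine ⟨?_, ⟨m, Finset.mem_singleton_self m⟩, Finset.singleton_subset_iff.mpr hmS⟩
          simp only [Finset.coe_singleton]
          exact Set.Subsingleton.isChain (Set.subsingleton_singleton)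
        · exact ⟨(hCC'.1 d hd).1, (hCC'.1 d hd).2.1, (hCC'.1 d hd).2.2.trans hS'S⟩
      · intro x hx
        by_cases hxm : x = m
        · exact ⟨{m}, Finset.mem_insert_self _ _, hxm ▸ Finset.mem_singleton_self m⟩
        · obtain ⟨d, hd, hxd⟩ := hCC'.2.1 x (Finset.mem_erase.mpr ⟨hxm, hx⟩)
          exact ⟨d, Finset.mem_insert_of_mem hd, hxd⟩
      · intro c₁ h₁ c₂ h₂ hne
        rcases Finset.mem_insert.mp h₁ with rfl | h₁ <;>
          rcases Finset.mem_insert.mp h₂ with rfl | h₂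
        · exact absurd rfl hne
        · exact Finset.disjoint_left.mpr fun x hx hx' =>
            hmS' ((Finset.mem_singleton.mp hx) ▸ (hCC'.1 _ h₂).2.2 hx')
        · exact Finset.disjoint_right.mpr fun x hx hx' =>
            hmS' ((Finset.mem_singleton.mp hx) ▸ (hCC'.1 _ h₁).2.2 hx')
        · exact hCC'.2.2 c₁ h₁ c₂ h₂ hne
      · have h1 : (insert {m} C').card ≤ C'.card + 1 := Finset.card_insert_le _ _
        omega

end Dilworth

/-- Dilworth's theorem: a finite poset `P` can be partitioned into `w` chains,
where `w` is the maximum cardinality of an antichain in `P`. -/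
theorem stmt13 {P : Type*} [PartialOrder P] [Fintype P] [DecidableEq P] (w : ℕ)
    (hw : IsGreatest
      {c : ℕ | ∃ A : Finset P, IsAntichain (· ≤ ·) (A : Set P) ∧ A.card = c} w) :
    ∃ C : Finset (Finset P), C.card = w ∧
      (∀ c ∈ C, IsChain (· ≤ ·) (c : Set P)) ∧
      ∀ x : P, ∃! c : Finset P, c ∈ C ∧ x ∈ c := by
  classical
  have hweq : w = acWidth (Finset.univ : Finset P) := by
    obtain ⟨A, hA, hAcard⟩ := hw.1
    refine le_antisymm (hAcard ▸ le_acWidth (Finset.subset_univ A) hA) ?_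
    obtain ⟨B, -, hBac, hBcard⟩ := exists_acWidth (Finset.univ : Finset P)
    exact hBcard ▸ hw.2 ⟨B, hBac, rfl⟩
  obtain ⟨C, hCC, hle⟩ :=
    dilworth_aux (Finset.univ : Finset P).card Finset.univ le_rfl
  have hge : acWidth (Finset.univ : Finset P) ≤ C.card :=
    acWidth_le_card_of_cover hCC
  refine ⟨C, by omega, fun c hc => (hCC.1 c hc).1, ?_⟩
  intro x
  obtain ⟨c, hc, hxc⟩ := hCC.2.1 x (Finset.mem_univ x)
  refine ⟨c, ⟨hc, hxc⟩, ?_⟩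
  rintro d ⟨hd, hxd⟩
  by_contra hne
  exact (Finset.disjoint_left.mp (hCC.2.2 d hd c hc hne) hxd) hxc
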